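/- (Classification of vectors of type (a) in L₄) Let c ∈ ℤ⁴ be nonzero. Then cᵀG₄⁻¹c = 1 and the least positive integer k with k·G₄⁻¹c ∈ ℤ⁴ equals 2 if and only if c = (2,1,1,1) or c = (−2,−1,−1,−1). -/

import Mathlib

open Matrix

/-- The Gram matrix of the even positive definite lattice `L₄` (determinant 500). -/
def G4 : Matrix (Fin 4) (Fin 4) ℚ :=
  !![4, 2, 2, 2; 2, 6, 1, 1; 2, 1, 6, 1; 2, 1, 1, 6]

def B4 : Matrix (Fin 4) (Fin 4) ℚ :=
  !![4/10, -1/10, -1/10, -1/10; -1/10, 2/10, 0, 0; -1/10, 0, 2/10, 0; -1/10, 0, 0, 2/10]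

lemma G4_inv : G4⁻¹ = B4 := by
  apply Matrix.inv_eq_right_inv
  ext i j
  fin_cases i <;> fin_cases j <;>
    norm_num [Matrix.mul_apply, Fin.sum_univ_four, G4, B4, Matrix.vecHead, Matrix.vecTail, Matrix.cons_val_two, Matrix.cons_val_three,
      Matrix.one_apply] <;> rfl

lemma mulVec_B4 (v : Fin 4 → ℚ) (i : Fin 4) :
    B4.mulVec v i =
      ![(4*v 0 - v 1 - v 2 - v 3)/10, (-(v 0) + 2*v 1)/10,
        (-(v 0) + 2*v 2)/10, (-(v 0) + 2*v 3)/10] i := by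
  fin_cases i <;>
    norm_num [B4, Matrix.mulVec, dotProduct, Fin.sum_univ_four, Matrix.vecHead,
      Matrix.vecTail, Matrix.cons_val_two, Matrix.cons_val_three] <;> ring

set_option maxHeartbeats 1600000 in
/-- Classification of vectors of type (a) in `L₄`: a nonzero `c ∈ ℤ⁴` has norm
`cᵀG₄⁻¹c = 1` and order `2` in the discriminant group iff `c = ±(2,1,1,1)`. -/
theorem L4_type_a_classification (c : Fin 4 → ℤ) (hc : c ≠ 0) :
    ((fun i => (c i : ℚ)) ⬝ᵥ G4⁻¹.mulVec (fun i => (c i : ℚ)) = 1 ∧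
      IsLeast {k : ℕ | 0 < k ∧
        ∀ i, ∃ m : ℤ, (k : ℚ) * G4⁻¹.mulVec (fun i => (c i : ℚ)) i = (m : ℚ)} 2) ↔
    (c = ![2, 1, 1, 1] ∨ c = ![-2, -1, -1, -1]) := by
  rw [G4_inv]
  constructor
  · rintro ⟨hnorm, ⟨⟨-, hmem⟩, -⟩⟩
    obtain ⟨m0, h0⟩ := hmem 0
    obtain ⟨m1, h1⟩ := hmem 1
    obtain ⟨m2, h2⟩ := hmem 2
    obtain ⟨m3, h3⟩ := hmem 3
    rw [mulVec_B4] at h0 h1 h2 h3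
    simp only [dotProduct, Fin.sum_univ_four, mulVec_B4] at hnorm
    norm_num [Matrix.vecHead, Matrix.vecTail, Matrix.cons_val_two, Matrix.cons_val_three] at hnorm h0 h1 h2 h3
    set a := c 0 with ha
    set b := c 1 with hb
    set d := c 2 with hd
    set e := c 3 with he
    have e0 : 2 * (4*a - b - d - e) = 10 * m0 := by
      have : ((2 * (4*a - b - d - e) : ℤ) : ℚ) = ((10 * m0 : ℤ) : ℚ) := by
        push_cast; linarith [h0]
      exact_mod_cast this
    have e1 : 2 * (-a + 2*b) = 10 * m1 := by
      have : ((2 * (-a + 2*b) : ℤ) : ℚ) = ((10 * m1 : ℤ) : ℚ) := by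
        push_cast; linarith [h1]
      exact_mod_cast this
    have e2 : 2 * (-a + 2*d) = 10 * m2 := by
      have : ((2 * (-a + 2*d) : ℤ) : ℚ) = ((10 * m2 : ℤ) : ℚ) := by
        push_cast; linarith [h2]
      exact_mod_cast this
    have e3 : 2 * (-a + 2*e) = 10 * m3 := by
      have : ((2 * (-a + 2*e) : ℤ) : ℚ) = ((10 * m3 : ℤ) : ℚ) := by
        push_cast; linarith [h3]
      exact_mod_cast this
    have hq : 4*a*a + 2*b*b + 2*d*d + 2*e*e - 2*a*b - 2*a*d - 2*a*e = 10 := by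
      have : ((4*a*a + 2*b*b + 2*d*d + 2*e*e - 2*a*b - 2*a*d - 2*a*e : ℤ) : ℚ)
          = ((10 : ℤ) : ℚ) := by
        push_cast; linarith [hnorm]
      exact_mod_cast this
    have hb0 : a * a ≤ 4 := by
      nlinarith [sq_nonneg (2*b - a), sq_nonneg (2*d - a), sq_nonneg (2*e - a)]
    have hb1 : b * b ≤ 6 := by
      nlinarith [sq_nonneg (3*a - b), sq_nonneg (2*d - a), sq_nonneg (2*e - a)]
    have hb2 : d * d ≤ 6 := by
      nlinarith [sq_nonneg (3*a - d), sq_nonneg (2*b - a), sq_nonneg (2*e - a)]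
    have hb3 : e * e ≤ 6 := by
      nlinarith [sq_nonneg (3*a - e), sq_nonneg (2*b - a), sq_nonneg (2*d - a)]
    have ra : -2 ≤ a ∧ a ≤ 2 := by constructor <;> nlinarith
    have rb : -2 ≤ b ∧ b ≤ 2 := by constructor <;> nlinarith
    have rd : -2 ≤ d ∧ d ≤ 2 := by constructor <;> nlinarith
    have re : -2 ≤ e ∧ e ≤ 2 := by constructor <;> nlinarith
    clear h0 h1 h2 h3 hnorm hmem hc hb0 hb1 hb2 hb3
    have key : (a = 2 ∧ b = 1 ∧ d = 1 ∧ e = 1) ∨ (a = -2 ∧ b = -1 ∧ d = -1 ∧ e = -1) := by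
      obtain ⟨ra1, ra2⟩ := ra
      obtain ⟨rb1, rb2⟩ := rb
      obtain ⟨rd1, rd2⟩ := rd
      obtain ⟨re1, re2⟩ := re
      clear_value a b d e
      clear ha hb hd he
      interval_cases a <;> interval_cases b <;> interval_cases d <;> interval_cases e <;>
        omega
    rcases key with ⟨k0, k1, k2, k3⟩ | ⟨k0, k1, k2, k3⟩
    · left; funext i; fin_cases i
      · simpa using k0
      · simpa using k1
      · simpa using k2
      · simpa using k3
    · right; funext i; fin_cases i
      · simpa using k0
      · simpa using k1
      · simpa using k2
      · simpa using k3
  · rintro (rfl | rfl)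
    · refine ⟨?_, ⟨⟨two_pos, ?_⟩, ?_⟩⟩
      · norm_num [dotProduct, Fin.sum_univ_four, mulVec_B4, Matrix.vecHead, Matrix.vecTail, Matrix.cons_val_two, Matrix.cons_val_three]
      · intro i
        fin_cases i
        · exact ⟨1, by norm_num [mulVec_B4, Matrix.vecHead, Matrix.vecTail, Matrix.cons_val_two, Matrix.cons_val_three]⟩
        · exact ⟨0, by norm_num [mulVec_B4, Matrix.vecHead, Matrix.vecTail, Matrix.cons_val_two, Matrix.cons_val_three]⟩
        · exact ⟨0, by norm_num [mulVec_B4, Matrix.vecHead, Matrix.vecTail, Matrix.cons_val_two, Matrix.cons_val_three]⟩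
        · exact ⟨0, by norm_num [mulVec_B4, Matrix.vecHead, Matrix.vecTail, Matrix.cons_val_two, Matrix.cons_val_three]⟩
      · rintro k ⟨hk0, hk⟩
        obtain ⟨m, hm⟩ := hk 0
        rw [mulVec_B4] at hm
        norm_num [Matrix.vecHead, Matrix.vecTail, Matrix.cons_val_two, Matrix.cons_val_three] at hm
        have : (k : ℤ) = 2 * m := by
          have : ((k : ℤ) : ℚ) = ((2 * m : ℤ) : ℚ) := by push_cast; linarith [hm]
          exact_mod_cast this
        omega
    · refine ⟨?_, ⟨⟨two_pos, ?_⟩, ?_⟩⟩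
      · norm_num [dotProduct, Fin.sum_univ_four, mulVec_B4, Matrix.vecHead, Matrix.vecTail, Matrix.cons_val_two, Matrix.cons_val_three]
      · intro i
        fin_cases i
        · exact ⟨-1, by norm_num [mulVec_B4, Matrix.vecHead, Matrix.vecTail, Matrix.cons_val_two, Matrix.cons_val_three]⟩
        · exact ⟨0, by norm_num [mulVec_B4, Matrix.vecHead, Matrix.vecTail, Matrix.cons_val_two, Matrix.cons_val_three]⟩
        · exact ⟨0, by norm_num [mulVec_B4, Matrix.vecHead, Matrix.vecTail, Matrix.cons_val_two, Matrix.cons_val_three]⟩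
        · exact ⟨0, by norm_num [mulVec_B4, Matrix.vecHead, Matrix.vecTail, Matrix.cons_val_two, Matrix.cons_val_three]⟩
      · rintro k ⟨hk0, hk⟩
        obtain ⟨m, hm⟩ := hk 0
        rw [mulVec_B4] at hm
        norm_num [Matrix.vecHead, Matrix.vecTail, Matrix.cons_val_two, Matrix.cons_val_three] at hm
        have : (k : ℤ) = -(2 * m) := by
          have : ((k : ℤ) : ℚ) = ((-(2 * m) : ℤ) : ℚ) := by push_cast; linarith [hm]
          exact_mod_cast this
        omega
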